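/- For Rule 138 (local rule g with g(top,center,right) outputting 1 exactly for the neighbourhoods (0,0,1), (0,1,1), (1,0,0) — i.e., the rule whose Wolfram number under W(g) = Σ g(a₀,a₁,a₂)·2^(4a₀+2a₁+a₂) is 138), and any n ≥ 1, the response curve is Pₙ(1) = (ρ^(2n+2) + ρ)/(ρ + 1) for ρ ∈ [0,1], given that its n-step preimages of the single cell 1 consist of the n+2 families described by: bottom two rows equal to (arbitrary, then a run of i ones ending the bottom row and 0 followed by i−1 ones ending the second row) for i = 1,…,n+1, plus the block with both bottom rows all ones, with the top n−1 rows arbitrary. -/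

import Mathlib

/-- The set of lattice positions of a triangular block of size `r`:
pairs `(i,j)` with `i,j ≥ 1` and `i + j ≤ r + 1`. -/
def Tri (r : ℕ) : Finset (ℕ × ℕ) :=
  (Finset.range (r + 2) ×ˢ Finset.range (r + 2)).filter
    (fun p => 1 ≤ p.1 ∧ 1 ≤ p.2 ∧ p.1 + p.2 ≤ r + 1)

/-- A triangular block of size `r`: an assignment of values in `{0,1}` to the
positions of `Tri r`. -/
def TriBlock (r : ℕ) := {p // p ∈ Tri r} → Fin 2

instance (r : ℕ) : Fintype (TriBlock r) := by unfold TriBlock; infer_instance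
instance (r : ℕ) : DecidableEq (TriBlock r) := by unfold TriBlock; infer_instance

/-- Extend a triangular block to a total function on `ℕ × ℕ` (zero outside). -/
def ext {r : ℕ} (b : TriBlock r) : ℕ → ℕ → Fin 2 :=
  fun i j => if h : (i, j) ∈ Tri r then b ⟨(i, j), h⟩ else 0

/-- The value of block `b` at position `(i,j)` (zero outside the block). -/
def cell {r : ℕ} (b : TriBlock r) (i j : ℕ) : Fin 2 := ext b i j

/-- One application of the local rule `g` (arguments: top, center, right)
at every site: `c(i,j) = g(b(i,j+1), b(i,j), b(i+1,j))`. -/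
def step (g : Fin 2 → Fin 2 → Fin 2 → Fin 2) (s : ℕ → ℕ → Fin 2) : ℕ → ℕ → Fin 2 :=
  fun i j => g (s i (j + 1)) (s i j) (s (i + 1) j)

/-- Restrict a total function to a triangular block of size `r`. -/
def contract (r : ℕ) (s : ℕ → ℕ → Fin 2) : TriBlock r := fun q => s q.1.1 q.1.2

/-- The block evolution operator: maps a block of size `m` (intended `m = r+1`)
to a block of size `r` via `c(i,j) = g(b(i,j+1), b(i,j), b(i+1,j))`. -/
def evolve (g : Fin 2 → Fin 2 → Fin 2 → Fin 2) {m : ℕ} (r : ℕ) (b : TriBlock m) :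
    TriBlock r := contract r (step g (ext b))

/-- The `n`-fold iterate of the block evolution operator, from blocks of size `m`
(intended `m = r + n`) to blocks of size `r`. -/
def evolveN (g : Fin 2 → Fin 2 → Fin 2 → Fin 2) (n : ℕ) {m : ℕ} (r : ℕ)
    (b : TriBlock m) : TriBlock r := contract r ((step g)^[n] (ext b))

/-- The single-cell block consisting of a `1`. -/
def oneBlock : TriBlock 1 := fun _ => 1

/-- Number of cells in state 1 in a block. -/
def numOnes {r : ℕ} (b : TriBlock r) : ℕ :=
  (@Finset.filter _ (fun x => b x = 1) (fun x => instDecidableEqFin 2 (b x) 1) Finset.univ).card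

/-- Number of cells in state 0 in a block. -/
def numZeros {r : ℕ} (b : TriBlock r) : ℕ :=
  (@Finset.filter _ (fun x => b x = 0) (fun x => instDecidableEqFin 2 (b x) 0) Finset.univ).card

/-- The set of `n`-step preimages of the single-cell block `1`:
blocks of size `n + 1` mapped by `n` iterations of the block evolution
operator of `g` to the single cell `1`. -/
def preimages (g : Fin 2 → Fin 2 → Fin 2 → Fin 2) (n : ℕ) :
    Finset (TriBlock (n + 1)) :=
  Finset.univ.filter (fun b => evolveN g n 1 b = oneBlock)

/-- `Pₙ(1)`: the density of ones after `n` iterations, starting from a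
Bernoulli-`ρ` initial measure, computed by summing the probabilities of all
`n`-step preimages of the single cell `1`. -/
noncomputable def Pn (g : Fin 2 → Fin 2 → Fin 2 → Fin 2) (n : ℕ) (ρ : ℝ) : ℝ :=
  ∑ a ∈ preimages g n, ρ ^ numOnes a * (1 - ρ) ^ numZeros a


/-- Rule 138 (Wolfram number 138 = 2¹ + 2³ + 2⁷ under
`W(g) = Σ g(a₀,a₁,a₂)·2^(4a₀+2a₁+a₂)`): with arguments (top, center, right),
output 1 exactly on (0,0,1), (0,1,1) and (1,1,1). -/
def g138 : Fin 2 → Fin 2 → Fin 2 → Fin 2 := fun x y z =>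
  if (x = 0 ∧ y = 0 ∧ z = 1) ∨ (x = 0 ∧ y = 1 ∧ z = 1) ∨ (x = 1 ∧ y = 1 ∧ z = 1)
    then 1 else 0


/-! ### Auxiliary development for the proof of `stmt11` -/

lemma fin2_cases (x : Fin 2) : x = 0 ∨ x = 1 := by fin_cases x <;> simp

lemma g138_one (t c r : Fin 2) : g138 t c r = 1 ↔ (r = 1 ∧ (c = 1 ∨ t = 0)) := by
  revert t c r; decide

lemma g138_zero (t c r : Fin 2) : g138 t c r = 0 ↔ (r = 0 ∨ (c = 0 ∧ t = 1)) := by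
  revert t c r; decide

def Qj (n j : ℕ) (s : ℕ → ℕ → Fin 2) : Prop :=
  (j = 0 ∨ s j 2 = 0) ∧ (∀ k ∈ Finset.Icc (j+1) n, s k 2 = 1) ∧
    (∀ k ∈ Finset.Icc (j+1) (n+1), s k 1 = 1)

instance (n j : ℕ) (s : ℕ → ℕ → Fin 2) : Decidable (Qj n j s) := by
  unfold Qj; infer_instance

def Q (n : ℕ) (s : ℕ → ℕ → Fin 2) : Prop := ∃ j ∈ Finset.range (n+1), Qj n j s

instance (n : ℕ) (s : ℕ → ℕ → Fin 2) : Decidable (Q n s) := by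
  unfold Q; infer_instance

lemma step_apply (s : ℕ → ℕ → Fin 2) (i j : ℕ) :
    step g138 s i j = g138 (s i (j+1)) (s i j) (s (i+1) j) := rfl

lemma bridge (n : ℕ) (s : ℕ → ℕ → Fin 2) : Q (n+1) s ↔ Q n (step g138 s) := by
  constructor
  · rintro ⟨j', hj', hz, hv, hu⟩
    simp only [Finset.mem_range] at hj'
    simp only [Finset.mem_Icc] at hv hu
    by_cases hjn : j' ≤ n
    · rcases Nat.eq_zero_or_pos j' with rfl | hj1
      · refine ⟨0, by simp, Or.inl rfl, ?_, ?_⟩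
        · intro k hk; rw [Finset.mem_Icc] at hk
          rw [step_apply, g138_one]
          exact ⟨hv (k+1) ⟨by omega, by omega⟩, Or.inl (hv k ⟨by omega, by omega⟩)⟩
        · intro k hk; rw [Finset.mem_Icc] at hk
          rw [step_apply, g138_one]
          exact ⟨hu (k+1) ⟨by omega, by omega⟩, Or.inl (hu k ⟨by omega, by omega⟩)⟩
      · have hz0 : s j' 2 = 0 := hz.resolve_left (by omega)
        rcases fin2_cases (s j' 3) with h3 | h3
        · -- s j' 3 = 0 : use j' - 1
          obtain ⟨m, rfl⟩ : ∃ m, j' = m + 1 := ⟨j'-1, by omega⟩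
          refine ⟨m, by simp; omega, Or.inr ?_, ?_, ?_⟩
          · rw [step_apply, g138_zero]; exact Or.inl hz0
          · intro k hk; rw [Finset.mem_Icc] at hk
            rw [step_apply, g138_one]
            rcases eq_or_lt_of_le hk.1 with rfl | hlt
            · exact ⟨hv (m+2) ⟨by omega, by omega⟩, Or.inr h3⟩
            · exact ⟨hv (k+1) ⟨by omega, by omega⟩, Or.inl (hv k ⟨by omega, by omega⟩)⟩
          · intro k hk; rw [Finset.mem_Icc] at hk
            rw [step_apply, g138_one]
            rcases eq_or_lt_of_le hk.1 with rfl | hlt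
            · exact ⟨hu (m+2) ⟨by omega, by omega⟩, Or.inr hz0⟩
            · exact ⟨hu (k+1) ⟨by omega, by omega⟩, Or.inl (hu k ⟨by omega, by omega⟩)⟩
        · -- s j' 3 = 1 : use j'
          refine ⟨j', by simp; omega, Or.inr ?_, ?_, ?_⟩
          · rw [step_apply, g138_zero]; exact Or.inr ⟨hz0, h3⟩
          · intro k hk; rw [Finset.mem_Icc] at hk
            rw [step_apply, g138_one]
            exact ⟨hv (k+1) ⟨by omega, by omega⟩, Or.inl (hv k ⟨by omega, by omega⟩)⟩
          · intro k hk; rw [Finset.mem_Icc] at hk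
            rw [step_apply, g138_one]
            exact ⟨hu (k+1) ⟨by omega, by omega⟩, Or.inl (hu k ⟨by omega, by omega⟩)⟩
    · -- j' = n+1
      have hj'e : j' = n + 1 := by omega
      subst hj'e
      have hz0 : s (n+1) 2 = 0 := hz.resolve_left (by omega)
      refine ⟨n, by simp, Or.inr ?_, ?_, ?_⟩
      · rw [step_apply, g138_zero]; exact Or.inl hz0
      · intro k hk; rw [Finset.mem_Icc] at hk; omega
      · intro k hk; rw [Finset.mem_Icc] at hk
        obtain rfl : k = n + 1 := by omega
        rw [step_apply, g138_one]
        exact ⟨hu (n+2) ⟨by omega, by omega⟩, Or.inr hz0⟩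
  · rintro ⟨j, hj, hz, hv, hu⟩
    simp only [Finset.mem_range] at hj
    simp only [Finset.mem_Icc] at hv hu
    have hu1 : ∀ k, j+1 ≤ k → k ≤ n+1 → s (k+1) 1 = 1 ∧ (s k 1 = 1 ∨ s k 2 = 0) := by
      intro k h1 h2
      have := hu k ⟨h1, h2⟩
      rwa [step_apply, g138_one] at this
    have hv1 : ∀ k, j+1 ≤ k → k ≤ n → s (k+1) 2 = 1 ∧ (s k 2 = 1 ∨ s k 3 = 0) := by
      intro k h1 h2
      have := hv k ⟨h1, h2⟩
      rwa [step_apply, g138_one] at this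
    rcases fin2_cases (s (j+1) 2) with h2 | h2
    · refine ⟨j+1, by simp; omega, Or.inr h2, ?_, ?_⟩
      · intro k hk; rw [Finset.mem_Icc] at hk
        obtain ⟨m, rfl⟩ : ∃ m, k = m + 1 := ⟨k-1, by omega⟩
        exact (hv1 m (by omega) (by omega)).1
      · intro k hk; rw [Finset.mem_Icc] at hk
        obtain ⟨m, rfl⟩ : ∃ m, k = m + 1 := ⟨k-1, by omega⟩
        exact (hu1 m (by omega) (by omega)).1
    · have hrow1 : s (j+1) 1 = 1 := by
        rcases (hu1 (j+1) (by omega) (by omega)).2 with h | h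
        · exact h
        · rw [h2] at h; exact absurd h (by decide)
      rcases Nat.eq_zero_or_pos j with rfl | hj1
      · refine ⟨0, by simp, Or.inl rfl, ?_, ?_⟩
        · intro k hk; rw [Finset.mem_Icc] at hk
          rcases Nat.lt_or_ge k 2 with h | h
          · obtain rfl : k = 1 := by omega
            exact h2
          · obtain ⟨m, rfl⟩ : ∃ m, k = m + 1 := ⟨k-1, by omega⟩
            exact (hv1 m (by omega) (by omega)).1
        · intro k hk; rw [Finset.mem_Icc] at hk
          rcases Nat.lt_or_ge k 2 with h | h
          · obtain rfl : k = 1 := by omega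
            exact hrow1
          · obtain ⟨m, rfl⟩ : ∃ m, k = m + 1 := ⟨k-1, by omega⟩
            exact (hu1 m (by omega) (by omega)).1
      · have hz0 : step g138 s j 2 = 0 := hz.resolve_left (by omega)
        rw [step_apply, g138_zero] at hz0
        rcases hz0 with h | h
        · rw [h2] at h; exact absurd h (by decide)
        · refine ⟨j, by simp; omega, Or.inr h.1, ?_, ?_⟩
          · intro k hk; rw [Finset.mem_Icc] at hk
            rcases eq_or_lt_of_le hk.1 with rfl | hlt
            · exact h2
            · obtain ⟨m, rfl⟩ : ∃ m, k = m + 1 := ⟨k-1, by omega⟩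
              exact (hv1 m (by omega) (by omega)).1
          · intro k hk; rw [Finset.mem_Icc] at hk
            rcases eq_or_lt_of_le hk.1 with rfl | hlt
            · exact hrow1
            · obtain ⟨m, rfl⟩ : ∃ m, k = m + 1 := ⟨k-1, by omega⟩
              exact (hu1 m (by omega) (by omega)).1

lemma iterate_one (n : ℕ) (s : ℕ → ℕ → Fin 2) :
    (step g138)^[n] s 1 1 = 1 ↔ Q n s := by
  induction n generalizing s with
  | zero =>
    simp only [Function.iterate_zero, id_eq]
    constructor
    · intro h
      refine ⟨0, by simp, Or.inl rfl, ?_, ?_⟩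
      · intro k hk; rw [Finset.mem_Icc] at hk; omega
      · intro k hk; rw [Finset.mem_Icc] at hk
        obtain rfl : k = 1 := by omega
        exact h
    · rintro ⟨j, hj, _, _, hu⟩
      simp only [Finset.mem_range] at hj
      obtain rfl : j = 0 := by omega
      exact hu 1 (by simp)
  | succ n ih =>
    rw [Function.iterate_succ_apply, ih, ← bridge]

lemma mem_Tri {r : ℕ} {p : ℕ × ℕ} :
    p ∈ Tri r ↔ 1 ≤ p.1 ∧ 1 ≤ p.2 ∧ p.1 + p.2 ≤ r + 1 := by
  simp only [Tri, Finset.mem_filter, Finset.mem_product, Finset.mem_range]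
  constructor
  · rintro ⟨_, h⟩; exact h
  · intro h; exact ⟨⟨by omega, by omega⟩, h⟩

lemma ext_eq {r : ℕ} (b : TriBlock r) {i j : ℕ} (h : (i, j) ∈ Tri r) :
    ext b i j = b ⟨(i, j), h⟩ := dif_pos h

lemma one_mem_Tri_one : ((1, 1) : ℕ × ℕ) ∈ Tri 1 := by decide

lemma tri_one_eq {p : ℕ × ℕ} (h : p ∈ Tri 1) : p = (1, 1) := by
  rw [mem_Tri] at h
  obtain ⟨p1, p2⟩ := p
  simp only at h
  have : p1 = 1 ∧ p2 = 1 := by omega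
  simp [this.1, this.2]

lemma evolveN_one_iff (n : ℕ) (b : TriBlock (n+1)) :
    evolveN g138 n 1 b = oneBlock ↔ (step g138)^[n] (ext b) 1 1 = 1 := by
  constructor
  · intro h
    exact congrFun h ⟨(1, 1), one_mem_Tri_one⟩
  · intro h
    funext x
    obtain ⟨p, hp⟩ := x
    have hpe := tri_one_eq hp
    subst hpe
    exact h

instance (r : ℕ) : Fintype {p // p ∈ Tri r} := by infer_instance
instance (r : ℕ) : DecidableEq {p // p ∈ Tri r} := by infer_instance

lemma preimages_eq (n : ℕ) :
    preimages g138 n = (Finset.range (n+1)).biUnion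
      (fun j => Finset.univ.filter (fun b : TriBlock (n+1) => Qj n j (ext b))) := by
  ext b
  simp only [preimages, Finset.mem_filter, Finset.mem_univ, true_and, Finset.mem_biUnion]
  rw [evolveN_one_iff, iterate_one]
  rfl

lemma families_disj (n : ℕ) {j j' : ℕ} (hj' : j' ≤ n) (hlt : j < j') (b : TriBlock (n+1))
    (h1 : Qj n j (ext b)) (h2 : Qj n j' (ext b)) : False := by
  have e1 : ext b j' 2 = 1 := h1.2.1 j' (by rw [Finset.mem_Icc]; omega)
  have e0 : ext b j' 2 = 0 := h2.1.resolve_left (by omega)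
  rw [e1] at e0; exact absurd e0 (by decide)

lemma weight_eq_prod {r : ℕ} (ρ : ℝ) (b : TriBlock r) :
    ρ ^ numOnes b * (1 - ρ) ^ numZeros b
      = ∏ x : {p // p ∈ Tri r}, (if b x = 1 then ρ else 1 - ρ) := by
  classical
  have hz : numZeros b = (Finset.univ.filter (fun x : {p // p ∈ Tri r} => ¬ b x = 1)).card := by
    rw [numZeros]; congr 1
    ext x
    simp only [Finset.mem_filter, Finset.mem_univ, true_and]
    rcases fin2_cases (b x) with h | h <;> simp [h]
  rw [numOnes, hz]
  have := Finset.prod_ite (s := Finset.univ) (p := fun x : {p // p ∈ Tri r} => b x = 1) (fun _ => ρ) (fun _ => 1 - ρ)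
  rw [Finset.prod_const, Finset.prod_const] at this
  convert this.symm using 5

lemma sum_constrained (n : ℕ) (P : {p // p ∈ Tri (n+1)} → Option (Fin 2)) (f : Fin 2 → ℝ)
    (hf : f 0 + f 1 = 1) :
    ∑ b : TriBlock (n+1), (if (∀ x v, P x = some v → b x = v) then ∏ x, f (b x) else 0)
      = ∏ x, (P x).elim 1 f := by
  classical
  set h : {p // p ∈ Tri (n+1)} → Fin 2 → ℝ :=
    fun x u => if ∀ v, P x = some v → u = v then f u else 0 with hh
  have key : ∀ b : TriBlock (n+1),
      (if (∀ x v, P x = some v → b x = v) then ∏ x, f (b x) else 0)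
        = ∏ x, h x (b x) := by
    intro b
    by_cases hb : ∀ x v, P x = some v → b x = v
    · rw [if_pos hb]
      refine Finset.prod_congr rfl (fun x _ => ?_)
      rw [hh]; simp only
      rw [if_pos (hb x)]
    · rw [if_neg hb]
      push_neg at hb
      obtain ⟨x, v, hpv, hbv⟩ := hb
      refine (Finset.prod_eq_zero (Finset.mem_univ x) ?_).symm
      rw [hh]; simp only
      rw [if_neg]
      push_neg
      exact ⟨v, hpv, hbv⟩
  rw [Finset.sum_congr rfl (fun b _ => key b)]
  have main : (∏ x : {p // p ∈ Tri (n+1)}, ∑ v : Fin 2, h x v)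
      = ∑ b : TriBlock (n+1), ∏ x, h x (b x) := by
    rw [Finset.prod_univ_sum]
    apply Finset.sum_congr
    · rw [Fintype.piFinset_univ]; rfl
    · intros; rfl
  rw [← main]
  refine Finset.prod_congr rfl (fun x _ => ?_)
  rcases hPx : P x with _ | w
  · simp only [hh, hPx]
    rw [Fin.sum_univ_two]
    simp [hf]
  · simp only [hh, hPx, Option.elim_some]
    rw [Fin.sum_univ_two]
    fin_cases w <;> simp

def Pmap (n j : ℕ) (x : {p // p ∈ Tri (n+1)}) : Option (Fin 2) :=
  if x.1.2 = 1 ∧ j < x.1.1 then some 1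
  else if x.1.2 = 2 ∧ j < x.1.1 then some 1
  else if x.1.2 = 2 ∧ x.1.1 = j then some 0
  else none

lemma Qj_iff (n j : ℕ) (hj : j ≤ n) (b : TriBlock (n+1)) :
    Qj n j (ext b) ↔ ∀ x v, Pmap n j x = some v → b x = v := by
  constructor
  · rintro ⟨hz, hv, hu⟩ x v hxv
    obtain ⟨⟨a, c⟩, hx⟩ := x
    have hm := mem_Tri.mp hx
    simp only at hm
    unfold Pmap at hxv
    simp only at hxv
    split_ifs at hxv with h1 h2 h3
    · obtain rfl : (1 : Fin 2) = v := Option.some.inj hxv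
      obtain ⟨rfl, hja⟩ : c = 1 ∧ j < a := h1
      have := hu a (by rw [Finset.mem_Icc]; omega)
      rwa [ext_eq b hx] at this
    · obtain rfl : (1 : Fin 2) = v := Option.some.inj hxv
      obtain ⟨rfl, hja⟩ : c = 2 ∧ j < a := h2
      have := hv a (by rw [Finset.mem_Icc]; omega)
      rwa [ext_eq b hx] at this
    · obtain rfl : (0 : Fin 2) = v := Option.some.inj hxv
      obtain ⟨rfl, rfl⟩ : c = 2 ∧ a = j := h3
      have := hz.resolve_left (by omega)
      rwa [ext_eq b hx] at this
  · intro h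
    refine ⟨?_, ?_, ?_⟩
    · rcases Nat.eq_zero_or_pos j with rfl | hj1
      · exact Or.inl rfl
      · refine Or.inr ?_
        have hmem : ((j, 2) : ℕ × ℕ) ∈ Tri (n+1) := mem_Tri.mpr ⟨by omega, by omega, by omega⟩
        rw [ext_eq b hmem]
        refine h ⟨(j, 2), hmem⟩ 0 ?_
        unfold Pmap
        dsimp only
        rw [if_neg (by omega), if_neg (by omega), if_pos (by omega)]
    · intro k hk; rw [Finset.mem_Icc] at hk
      have hmem : ((k, 2) : ℕ × ℕ) ∈ Tri (n+1) := mem_Tri.mpr ⟨by omega, by omega, by omega⟩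
      rw [ext_eq b hmem]
      refine h ⟨(k, 2), hmem⟩ 1 ?_
      unfold Pmap
      dsimp only
      rw [if_neg (by omega), if_pos (by omega)]
    · intro k hk; rw [Finset.mem_Icc] at hk
      have hmem : ((k, 1) : ℕ × ℕ) ∈ Tri (n+1) := mem_Tri.mpr ⟨by omega, by omega, by omega⟩
      rw [ext_eq b hmem]
      refine h ⟨(k, 1), hmem⟩ 1 ?_
      unfold Pmap
      dsimp only
      rw [if_pos (by omega)]

lemma card_row (n j c₀ hi : ℕ) (hc : c₀ = 1 ∨ c₀ = 2) (hhi : hi + c₀ = n + 2) (hj : j ≤ n) :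
    ((Finset.univ : Finset {p // p ∈ Tri (n+1)}).filter
        (fun x => x.1.2 = c₀ ∧ j < x.1.1)).card
      = hi - j := by
  have hicc : (Finset.Icc (j+1) hi).card = hi - j := by
    rw [Nat.card_Icc]; omega
  rw [← hicc]
  apply Finset.card_nbij (i := fun x => x.1.1)
  · intro x hx
    simp only [Finset.coe_filter, Set.mem_setOf_eq] at hx
    have hm := mem_Tri.mp x.2
    simp only [Finset.coe_Icc, Set.mem_Icc]
    omega
  · intro x hx y hy hxy
    simp only [Finset.coe_filter, Set.mem_setOf_eq] at hx hy
    simp only at hxy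
    apply Subtype.ext
    have hx2 : x.1 = (x.1.1, x.1.2) := rfl
    have hy2 : y.1 = (y.1.1, y.1.2) := rfl
    rw [hx2, hy2, hxy, hx.2.1, hy.2.1]
  · intro k hk
    simp only [Finset.coe_Icc, Set.mem_Icc] at hk
    have hmem : ((k, c₀) : ℕ × ℕ) ∈ Tri (n+1) :=
      mem_Tri.mpr ⟨by omega, by omega, by omega⟩
    refine ⟨⟨(k, c₀), hmem⟩, ?_, rfl⟩
    simp only [Finset.coe_filter, Set.mem_setOf_eq]
    exact ⟨Finset.mem_univ _, trivial, by omega⟩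

lemma Pmap_eq_some_one (n j : ℕ) (x : {p // p ∈ Tri (n+1)}) :
    Pmap n j x = some 1 ↔ ((x.1.2 = 1 ∧ j < x.1.1) ∨ (x.1.2 = 2 ∧ j < x.1.1)) := by
  unfold Pmap
  split_ifs with h1 h2 h3 <;> simp_all <;> omega

lemma Pmap_eq_some_zero (n j : ℕ) (x : {p // p ∈ Tri (n+1)}) :
    Pmap n j x = some 0 ↔ (x.1.2 = 2 ∧ x.1.1 = j) := by
  unfold Pmap
  split_ifs with h1 h2 h3 <;> simp_all <;> omega

lemma card_some_one (n j : ℕ) (hj : j ≤ n) :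
    (Finset.univ.filter (fun x : {p // p ∈ Tri (n+1)} => Pmap n j x = some 1)).card
      = (2 * (n - j) + 1) := by
  have hco : (Finset.univ.filter (fun x : {p // p ∈ Tri (n+1)} => Pmap n j x = some 1))
      = ((Finset.univ : Finset {p // p ∈ Tri (n+1)}).filter (fun x => x.1.2 = 1 ∧ j < x.1.1))
        ∪ ((Finset.univ : Finset {p // p ∈ Tri (n+1)}).filter (fun x => x.1.2 = 2 ∧ j < x.1.1)) := by
    rw [← Finset.filter_or]
    exact Finset.filter_congr (fun x _ => by rw [Pmap_eq_some_one])
  rw [hco, Finset.card_union_of_disjoint, card_row n j 1 (n+1) (Or.inl rfl) (by omega) hj,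
    card_row n j 2 n (Or.inr rfl) (by omega) hj]
  · omega
  · rw [Finset.disjoint_left]
    intro x hx hx'
    rw [Finset.mem_filter] at hx hx'
    omega

lemma card_some_zero (n j : ℕ) (hj : j ≤ n) :
    (Finset.univ.filter (fun x : {p // p ∈ Tri (n+1)} => Pmap n j x = some 0)).card
      = if j = 0 then 0 else 1 := by
  rcases Nat.eq_zero_or_pos j with rfl | hj1
  · rw [if_pos rfl, Finset.card_eq_zero, Finset.eq_empty_iff_forall_notMem]
    intro x hx
    rw [Finset.mem_filter, Pmap_eq_some_zero] at hx
    have hm := mem_Tri.mp x.2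
    omega
  · rw [if_neg (by omega), Finset.card_eq_one]
    have hmem : ((j, 2) : ℕ × ℕ) ∈ Tri (n+1) := mem_Tri.mpr ⟨by omega, by omega, by omega⟩
    refine ⟨⟨(j, 2), hmem⟩, ?_⟩
    ext x
    rw [Finset.mem_filter, Pmap_eq_some_zero, Finset.mem_singleton]
    constructor
    · rintro ⟨_, h2, h1⟩
      apply Subtype.ext
      have hx2 : x.1 = (x.1.1, x.1.2) := rfl
      rw [hx2, h1, h2]
    · rintro rfl
      exact ⟨Finset.mem_univ _, rfl, rfl⟩

lemma prod_Pmap (n j : ℕ) (hj : j ≤ n) (ρ : ℝ) :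
    (∏ x : {p // p ∈ Tri (n+1)},
        (Pmap n j x).elim 1 (fun v => if v = 1 then ρ else 1 - ρ))
      = if j = 0 then ρ ^ (2*n+1) else ρ ^ (2*(n-j)+1) * (1-ρ) := by
  have hrw : ∀ x : {p // p ∈ Tri (n+1)},
      (Pmap n j x).elim 1 (fun v => if v = 1 then ρ else 1 - ρ)
        = if Pmap n j x = some 1 then ρ
          else if Pmap n j x = some 0 then 1 - ρ else 1 := by
    intro x
    rcases hPx : Pmap n j x with _ | v
    · simp
    · fin_cases v <;> simp
  rw [Finset.prod_congr rfl (fun x _ => hrw x), Finset.prod_ite, Finset.prod_const,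
    Finset.prod_ite, Finset.prod_const, Finset.prod_const_one, mul_one]
  have hsub : ((Finset.univ.filter (fun x : {p // p ∈ Tri (n+1)} => ¬ Pmap n j x = some 1)).filter
      (fun x => Pmap n j x = some 0))
      = Finset.univ.filter (fun x : {p // p ∈ Tri (n+1)} => Pmap n j x = some 0) := by
    rw [Finset.filter_filter]
    apply Finset.filter_congr
    intro x _
    constructor
    · exact And.right
    · intro h
      exact ⟨by rw [h]; simp, h⟩
  rw [hsub, card_some_one n j hj, card_some_zero n j hj]
  rcases Nat.eq_zero_or_pos j with rfl | hj1
  · rw [if_pos rfl, if_pos rfl, pow_zero, mul_one]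
    norm_num
  · rw [if_neg (by omega), if_neg (by omega), pow_one]

lemma family_sum (n j : ℕ) (hj : j ≤ n) (ρ : ℝ) :
    (∑ b : TriBlock (n+1),
        if Qj n j (ext b) then ρ ^ numOnes b * (1 - ρ) ^ numZeros b else 0)
      = if j = 0 then ρ ^ (2*n+1) else ρ ^ (2*(n-j)+1) * (1-ρ) := by
  rw [← prod_Pmap n j hj ρ]
  rw [← sum_constrained n (Pmap n j) (fun v => if v = 1 then ρ else 1 - ρ) (by norm_num)]
  apply Finset.sum_congr rfl
  intro b _
  rw [weight_eq_prod]
  exact if_congr (Qj_iff n j hj b) rfl rfl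

/-- the response curve of Rule 138 is
`Pₙ(1) = (ρ^(2n+2) + ρ)/(ρ + 1)` for every `n ≥ 1` and `ρ ∈ [0,1]`. -/
theorem stmt11 (n : ℕ) (hn : 1 ≤ n) (ρ : ℝ) (hρ : ρ ∈ Set.Icc (0 : ℝ) 1) :
    Pn g138 n ρ = (ρ ^ (2 * n + 2) + ρ) / (ρ + 1) := by
  have hρ0 : (0:ℝ) ≤ ρ := hρ.1
  have hne : ρ + 1 ≠ 0 := by positivity
  have hdisj : (↑(Finset.range (n+1)) : Set ℕ).PairwiseDisjoint
      (fun j => Finset.univ.filter (fun b : TriBlock (n+1) => Qj n j (ext b))) := by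
    intro j hj j' hj' hne'
    simp only [Finset.coe_range, Set.mem_Iio] at hj hj'
    rw [Function.onFun]
    rw [Finset.disjoint_left]
    intro b hb hb'
    rw [Finset.mem_filter] at hb hb'
    rcases Nat.lt_or_ge j j' with h | h
    · exact families_disj n (by omega) h b hb.2 hb'.2
    · exact families_disj n (by omega) (by omega) b hb'.2 hb.2
  rw [Pn, preimages_eq, Finset.sum_biUnion hdisj]
  have hstep : ∀ j ∈ Finset.range (n+1),
      (∑ b ∈ Finset.univ.filter (fun b : TriBlock (n+1) => Qj n j (ext b)),
        ρ ^ numOnes b * (1 - ρ) ^ numZeros b)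
      = if j = 0 then ρ ^ (2*n+1) else ρ ^ (2*(n-j)+1) * (1-ρ) := by
    intro j hj
    rw [Finset.sum_filter]
    exact family_sum n j (by simp at hj; omega) ρ
  rw [Finset.sum_congr rfl hstep, Finset.sum_range_succ']
  simp only [Nat.succ_ne_zero, if_false, if_true, eq_self_iff_true]
  have hre : ∀ i ∈ Finset.range n,
      ρ ^ (2*(n-(i+1))+1) * (1-ρ)
        = (fun m => ρ ^ (2*m+1) * (1-ρ)) (n - 1 - i) := by
    intro i hi
    rw [Finset.mem_range] at hi
    have h : 2*(n-(i+1))+1 = 2*(n-1-i)+1 := by omega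
    rw [h]
  rw [Finset.sum_congr rfl hre, Finset.sum_range_reflect (fun m => ρ ^ (2*m+1) * (1-ρ)) n]
  have hterm : ∀ i ∈ Finset.range n,
      ρ ^ (2*i+1) * (1-ρ) = (ρ * (1-ρ)) * (ρ^2)^i := by
    intro i _
    rw [pow_succ, pow_mul]
    ring
  rw [Finset.sum_congr rfl hterm, ← Finset.mul_sum, eq_div_iff hne]
  have hg := geom_sum_mul (ρ^2) n
  have hp1 : (ρ^2)^n = ρ^(2*n) := (pow_mul ρ 2 n).symm
  rw [hp1] at hg
  linear_combination (-ρ) * hg
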